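/- Let C = (c_{ij}) be a tridiagonal matrix, ⟨W| = (1,0,0,...), |V^r⟩ the r-th standard basis column vector, Z_N = ⟨W|C^N|V^0⟩, and k_r = ∏_{i=0}^{r-1} c_{i,i+1}, assumed invertible. Then for N ≥ r ≥ 0, (1/k_r)·⟨W| C^N |V^r⟩ equals the ratio of determinants det(M^num)/det(M^den), where M^num is the (r+1)×(r+1) matrix with first row (Z_{N+r}, Z_{N+r-1}, ..., Z_N) and remaining rows given by (Z_{2r-i-j})_{i,j} for i ≥ 1, and M^den = (Z_{2r-i-j})_{i,j=0}^{r}. -/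

import Mathlib

noncomputable section
namespace Stmt7

variable {F : Type*} [Field F]

/-- The row vector `⟨W| = (1,0,0,…)`. -/
def Wrow : ℕ → F := fun i => if i = 0 then 1 else 0

/-- Right multiplication of a row vector `v` by the tridiagonal matrix `C = (c i j)`. -/
def stp (c : ℕ → ℕ → F) (v : ℕ → F) : ℕ → F := fun j =>
  (if j = 0 then 0 else v (j - 1) * c (j - 1) j) + v j * c j j + v (j + 1) * c (j + 1) j

/-- `Z_N = ⟨W| C^N |V^0⟩`. -/
def Z (c : ℕ → ℕ → F) (N : ℕ) : F := (stp c)^[N] Wrow 0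

/-! ### Auxiliary definitions -/

/-- Left multiplication of a column vector `w` by `C`. -/
def ltp (c : ℕ → ℕ → F) (w : ℕ → F) : ℕ → F := fun s =>
  w (s + 1) * c s (s + 1) + w s * c s s + (if s = 0 then 0 else w (s - 1) * c s (s - 1))

/-- `arow c n = ⟨W| C^n`. -/
def arow (c : ℕ → ℕ → F) (n : ℕ) : ℕ → F := (stp c)^[n] Wrow

/-- `acol c m = C^m |V^0⟩`. -/
def acol (c : ℕ → ℕ → F) (m : ℕ) : ℕ → F := (ltp c)^[m] (fun s => if s = 0 then 1 else 0)

lemma arow_succ (c : ℕ → ℕ → F) (n : ℕ) : arow c (n + 1) = stp c (arow c n) := by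
  simp [arow, Function.iterate_succ_apply']

lemma acol_succ (c : ℕ → ℕ → F) (m : ℕ) : acol c (m + 1) = ltp c (acol c m) := by
  simp [acol, Function.iterate_succ_apply']

lemma arow_eq_zero (c : ℕ → ℕ → F) : ∀ n s : ℕ, n < s → arow c n s = 0 := by
  intro n
  induction n with
  | zero =>
    intro s hs
    simp only [arow, Function.iterate_zero, id_eq, Wrow]
    rw [if_neg (by omega)]
  | succ n ih =>
    intro s hs
    rw [arow_succ]
    simp only [stp]
    rw [ih (s - 1) (by omega), ih s (by omega), ih (s + 1) (by omega)]
    simp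

lemma arow_diag (c : ℕ → ℕ → F) : ∀ n : ℕ, arow c n n = ∏ i ∈ Finset.range n, c i (i + 1) := by
  intro n
  induction n with
  | zero => simp [arow, Wrow]
  | succ n ih =>
    rw [arow_succ]
    simp only [stp]
    rw [arow_eq_zero c n (n + 1) (by omega), arow_eq_zero c n (n + 2) (by omega)]
    rw [if_neg (by omega)]
    simp only [Nat.add_sub_cancel]
    rw [ih, Finset.prod_range_succ]
    ring

lemma acol_eq_zero (c : ℕ → ℕ → F) : ∀ m s : ℕ, m < s → acol c m s = 0 := by
  intro m
  induction m with
  | zero =>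
    intro s hs
    simp only [acol, Function.iterate_zero, id_eq]
    rw [if_neg (by omega)]
  | succ m ih =>
    intro s hs
    rw [acol_succ]
    simp only [ltp]
    rw [ih (s - 1) (by omega), ih s (by omega), ih (s + 1) (by omega)]
    simp

/-- Summation by parts: pairing `(v·C)·w` against `v·(C·w)` with explicit boundary terms. -/
lemma sbp (c : ℕ → ℕ → F) (v w : ℕ → F) : ∀ K : ℕ,
    ∑ j ∈ Finset.range (K + 1), stp c v j * w j
      = ∑ s ∈ Finset.range (K + 1), v s * ltp c w s
        + v (K + 1) * c (K + 1) K * w K - v K * c K (K + 1) * w (K + 1) := by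
  intro K
  induction K with
  | zero =>
    rw [Finset.sum_range_one, Finset.sum_range_one]
    simp only [stp, ltp, if_pos rfl, ite_true]
    ring
  | succ K ih =>
    rw [Finset.sum_range_succ, Finset.sum_range_succ (fun s => v s * ltp c w s), ih]
    simp only [stp, ltp, if_neg (Nat.succ_ne_zero K), Nat.add_sub_cancel]
    ring

lemma pairing (c : ℕ → ℕ → F) : ∀ m n : ℕ,
    ∑ s ∈ Finset.range (n + m + 1), arow c n s * acol c m s = Z c (n + m) := by
  intro m
  induction m with
  | zero =>
    intro n
    have hz : ∀ s : ℕ, acol c 0 s = if s = 0 then (1 : F) else 0 := fun s => rfl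
    simp only [hz, mul_ite, mul_one, mul_zero]
    rw [Finset.sum_ite_eq' (Finset.range (n + 0 + 1)) 0 (arow c n)]
    rw [if_pos (Finset.mem_range.2 (by omega))]
    rfl
  | succ m ih =>
    intro n
    rw [acol_succ]
    have hb1 : arow c n (n + m + 2) = 0 := arow_eq_zero c _ _ (by omega)
    have hb2 : acol c m (n + m + 2) = 0 := acol_eq_zero c _ _ (by omega)
    have hsbp := sbp c (arow c n) (acol c m) (n + m + 1)
    have hstp : ∀ s, stp c (arow c n) s = arow c (n + 1) s := by
      intro s; rw [arow_succ]
    have : ∑ s ∈ Finset.range (n + m + 2), arow c n s * ltp c (acol c m) s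
        = ∑ s ∈ Finset.range (n + m + 2), arow c (n + 1) s * acol c m s := by
      have h2 : (n + m + 1) + 1 = n + m + 2 := rfl
      rw [h2] at hsbp
      have := hsbp
      rw [hb1, hb2] at this
      simp only [zero_mul, mul_zero, sub_zero, add_zero] at this
      rw [← this]
      exact Finset.sum_congr rfl fun s _ => by rw [hstp]
    rw [show n + (m + 1) + 1 = n + m + 2 by omega, this]
    have := ih (n + 1)
    rw [show n + 1 + m + 1 = n + m + 2 by omega] at this
    rw [this]
    congr 1
    omega

lemma pairing' (c : ℕ → ℕ → F) (n m K : ℕ) (h : m < K) :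
    ∑ s ∈ Finset.range K, arow c n s * acol c m s = Z c (n + m) := by
  have key : ∀ L : ℕ, m < L → ∑ s ∈ Finset.range L, arow c n s * acol c m s
      = ∑ s ∈ Finset.range (m + 1), arow c n s * acol c m s := by
    intro L hL
    rw [← Finset.sum_subset (Finset.range_subset_range.2 (by omega : m + 1 ≤ L))]
    intro x hx hx'
    rw [acol_eq_zero c m x (by simp only [Finset.mem_range] at hx hx'; omega), mul_zero]
  rw [key K h, ← key (n + m + 1) (by omega), pairing]

/-! ### The matrix factors -/

def A0mat (c : ℕ → ℕ → F) (r : ℕ) : Matrix (Fin (r + 1)) (Fin (r + 1)) F :=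
  Matrix.of fun i s => arow c (r - (i : ℕ)) (s : ℕ)

def A1mat (c : ℕ → ℕ → F) (N r : ℕ) : Matrix (Fin (r + 1)) (Fin (r + 1)) F :=
  Matrix.of fun i s => if (i : ℕ) = 0 then arow c N (s : ℕ) else arow c (r - (i : ℕ)) (s : ℕ)

def Bmat (c : ℕ → ℕ → F) (r : ℕ) : Matrix (Fin (r + 1)) (Fin (r + 1)) F :=
  Matrix.of fun s j => acol c (r - (j : ℕ)) (s : ℕ)

lemma hden_fac (c : ℕ → ℕ → F) (r : ℕ) :
    (Matrix.of fun i j : Fin (r + 1) => Z c (2 * r - (i : ℕ) - (j : ℕ)))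
      = A0mat c r * Bmat c r := by
  ext i j
  have hi := i.isLt
  have hj := j.isLt
  simp only [Matrix.mul_apply, Matrix.of_apply, A0mat, Bmat]
  rw [Fin.sum_univ_eq_sum_range (fun s => arow c (r - (i : ℕ)) s * acol c (r - (j : ℕ)) s)]
  rw [pairing' c (r - (i : ℕ)) (r - (j : ℕ)) (r + 1) (by omega)]
  congr 1
  omega

lemma hnum_fac (c : ℕ → ℕ → F) (N r : ℕ) (hNr : r ≤ N) :
    (Matrix.of fun i j : Fin (r + 1) =>
        if (i : ℕ) = 0 then Z c (N + r - (j : ℕ)) else Z c (2 * r - (i : ℕ) - (j : ℕ)))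
      = A1mat c N r * Bmat c r := by
  ext i j
  have hi := i.isLt
  have hj := j.isLt
  simp only [Matrix.mul_apply, Matrix.of_apply, A1mat, Bmat]
  by_cases h : (i : ℕ) = 0
  · simp only [h, if_true]
    rw [Fin.sum_univ_eq_sum_range (fun s => arow c N s * acol c (r - (j : ℕ)) s)]
    rw [pairing' c N (r - (j : ℕ)) (r + 1) (by omega)]
    congr 1
    omega
  · simp only [h, if_false]
    rw [Fin.sum_univ_eq_sum_range (fun s => arow c (r - (i : ℕ)) s * acol c (r - (j : ℕ)) s)]
    rw [pairing' c (r - (i : ℕ)) (r - (j : ℕ)) (r + 1) (by omega)]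
    congr 1
    omega

lemma det_key (c : ℕ → ℕ → F) (N r : ℕ) :
    (A1mat c N r).det * (∏ i ∈ Finset.range r, c i (i + 1))
      = (A0mat c r).det * arow c N r := by
  rw [Matrix.det_succ_column (A1mat c N r) (Fin.last r),
      Matrix.det_succ_column (A0mat c r) (Fin.last r)]
  rw [Finset.sum_eq_single_of_mem (0 : Fin (r + 1)) (Finset.mem_univ _)
    (fun b _ hb => by
      have hb' : (b : ℕ) ≠ 0 := fun h => hb (Fin.ext h)
      have hbl := b.isLt
      simp only [A1mat, Matrix.of_apply, Fin.val_last]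
      rw [if_neg hb', arow_eq_zero c (r - (b : ℕ)) r (by omega)]
      ring)]
  rw [Finset.sum_eq_single_of_mem (0 : Fin (r + 1)) (Finset.mem_univ _)
    (fun b _ hb => by
      have hb' : (b : ℕ) ≠ 0 := fun h => hb (Fin.ext h)
      have hbl := b.isLt
      simp only [A0mat, Matrix.of_apply, Fin.val_last]
      rw [arow_eq_zero c (r - (b : ℕ)) r (by omega)]
      ring)]
  have hsub : (A1mat c N r).submatrix (Fin.succAbove 0) (Fin.succAbove (Fin.last r))
      = (A0mat c r).submatrix (Fin.succAbove 0) (Fin.succAbove (Fin.last r)) := by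
    ext i s
    simp only [Matrix.submatrix_apply, A1mat, A0mat, Matrix.of_apply, Fin.zero_succAbove]
    rw [if_neg (by simp [Fin.val_succ])]
  rw [hsub]
  simp only [A1mat, A0mat, Matrix.of_apply, Fin.val_last, Fin.val_zero, if_pos rfl,
    Nat.sub_zero, arow_diag, ite_true, if_true]
  ring

theorem stmt7 (c : ℕ → ℕ → F)
    (htri : ∀ i j : ℕ, 1 < ((i : ℤ) - (j : ℤ)).natAbs → c i j = 0)
    (N r : ℕ) (hNr : r ≤ N)
    (hk : (∏ i ∈ Finset.range r, c i (i + 1)) ≠ 0)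
    (hden : (Matrix.of fun i j : Fin (r + 1) => Z c (2 * r - (i : ℕ) - (j : ℕ))).det ≠ 0) :
    (stp c)^[N] Wrow r / (∏ i ∈ Finset.range r, c i (i + 1)) =
      (Matrix.of fun i j : Fin (r + 1) =>
          if (i : ℕ) = 0 then Z c (N + r - (j : ℕ)) else Z c (2 * r - (i : ℕ) - (j : ℕ))).det /
        (Matrix.of fun i j : Fin (r + 1) => Z c (2 * r - (i : ℕ) - (j : ℕ))).det := by
  rw [hden_fac c r] at hden ⊢
  rw [hnum_fac c N r hNr]
  rw [Matrix.det_mul] at hden ⊢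
  have hA0 : (A0mat c r).det ≠ 0 := fun h => hden (by rw [h, zero_mul])
  have hB : (Bmat c r).det ≠ 0 := fun h => hden (by rw [h, mul_zero])
  have hkey := det_key c N r
  show arow c N r / (∏ i ∈ Finset.range r, c i (i + 1)) = _
  field_simp
  linear_combination (-(Bmat c r).det) * hkey + arow c N r * Matrix.det_mul (A0mat c r) (Bmat c r)

end Stmt7
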